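/- A topological space X is weakly initially λ-compact for every infinite cardinal λ (equivalently, every open cover of X has a finite subfamily with dense union) if and only if X is D-pseudocompact for every ultrafilter D over every set. -/

import Mathlib

open Cardinal Set

universe u v

/-- `x` is a `D`-limit point of the family of sets `O`. -/
def DLimitSets {X : Type u} {I : Type v} [TopologicalSpace X]
    (D : Ultrafilter I) (O : I → Set X) (x : X) : Prop :=
  ∀ U ∈ nhds x, {i | (U ∩ O i).Nonempty} ∈ D

/-- `X` is `D`-pseudocompact. -/
def DPseudocompact (X : Type u) {I : Type v} [TopologicalSpace X]
    (D : Ultrafilter I) : Prop :=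
  ∀ O : I → Set X, (∀ i, IsOpen (O i)) → (∀ i, (O i).Nonempty) →
    ∃ x : X, DLimitSets D O x

/-- Every open cover of cardinality at most `lam` has a finite subfamily with dense union. -/
def WeaklyInitiallyCompact (X : Type u) [TopologicalSpace X] (lam : Cardinal.{u}) : Prop :=
  ∀ 𝒰 : Set (Set X), (∀ U ∈ 𝒰, IsOpen U) → ⋃₀ 𝒰 = Set.univ →
    Cardinal.mk 𝒰 ≤ lam →
    ∃ t : Finset (Set X), ↑t ⊆ 𝒰 ∧ Dense (⋃₀ (t : Set (Set X)))

/-- A regular ultrafilter over `I` (regular of degree `|I|`): there is an `I`-indexed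
family of members of `D` every infinite subfamily of which has empty intersection. -/
def RegularUltrafilter {I : Type v} (D : Ultrafilter I) : Prop :=
  ∃ Z : I → Set I, (∀ i, Z i ∈ D) ∧
    ∀ S : Set I, S.Infinite → ⋂ i ∈ S, Z i = ∅

theorem weaklyInitiallyCompact_iff_dPseudocompact
    {X : Type u} [TopologicalSpace X] :
    (∀ lam : Cardinal.{u}, Cardinal.aleph0 ≤ lam → WeaklyInitiallyCompact X lam) ↔
      (∀ (I : Type u) (D : Ultrafilter I), DPseudocompact X D) := by
  classical
  constructor
  · intro h I D O hOopen hOne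
    by_contra hno
    push_neg at hno
    set 𝒰 : Set (Set X) := {U | IsOpen U ∧ {i | (U ∩ O i).Nonempty} ∉ D} with h𝒰
    have hcov : ⋃₀ 𝒰 = Set.univ := by
      ext x
      simp only [Set.mem_sUnion, Set.mem_univ, iff_true]
      have hx := hno x
      rw [DLimitSets] at hx; push_neg at hx
      obtain ⟨U, hU, hUD⟩ := hx
      obtain ⟨V, hVU, hVopen, hxV⟩ := mem_nhds_iff.mp hU
      refine ⟨V, ⟨hVopen, fun hmem => hUD ?_⟩, hxV⟩
      exact D.toFilter.sets_of_superset hmem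
        (fun i hi => hi.imp (fun y hy => ⟨hVU hy.1, hy.2⟩))
    obtain ⟨t, htsub, htdense⟩ := h (max ℵ₀ (Cardinal.mk (Set X))) (le_max_left _ _) 𝒰
      (fun U hU => hU.1) hcov ((Cardinal.mk_set_le 𝒰).trans (le_max_right _ _))
    have hmem : (⋂ U ∈ t, {i | (U ∩ O i).Nonempty}ᶜ) ∈ D := by
      refine (Filter.biInter_finset_mem t).mpr fun U hU => ?_
      exact Ultrafilter.compl_mem_iff_notMem.mpr (htsub hU).2
    obtain ⟨i, hi⟩ := D.toFilter.nonempty_of_mem hmem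
    simp only [Set.mem_iInter, Set.mem_compl_iff, Set.mem_setOf_eq] at hi
    obtain ⟨y, hyO, hyU⟩ := htdense.inter_open_nonempty (O i) (hOopen i) (hOne i)
    obtain ⟨U, hUt, hyU⟩ := hyU
    exact hi U hUt ⟨y, hyU, hyO⟩
  · intro h lam hlam 𝒰 hopen hcov hcard
    by_contra hno
    push_neg at hno
    set O : Finset (Set X) → Set X :=
      fun s => (closure (⋃₀ ↑(s.filter (· ∈ 𝒰))))ᶜ with hO
    have hOopen : ∀ s, IsOpen (O s) := fun s => isClosed_closure.isOpen_compl
    have hOne : ∀ s, (O s).Nonempty := by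
      intro s
      have hsub : ↑(s.filter (· ∈ 𝒰)) ⊆ 𝒰 := by
        intro U hU
        simp only [Finset.coe_filter, Set.mem_setOf_eq] at hU
        exact hU.2
      have := hno (s.filter (· ∈ 𝒰)) hsub
      rw [Dense] at this; push_neg at this
      obtain ⟨x, hx⟩ := this
      exact ⟨x, hx⟩
    have hne : (Filter.atTop : Filter (Finset (Set X))).NeBot := Filter.atTop_neBot
    obtain ⟨x, hx⟩ := h (Finset (Set X)) (Ultrafilter.of Filter.atTop) O hOopen hOne
    have hxmem : x ∈ ⋃₀ 𝒰 := hcov ▸ Set.mem_univ x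
    obtain ⟨U, hU𝒰, hxU⟩ := hxmem
    have h1 : {s | (U ∩ O s).Nonempty} ∈ Ultrafilter.of Filter.atTop :=
      hx U ((hopen U hU𝒰).mem_nhds hxU)
    have h2 : {s : Finset (Set X) | {U} ≤ s} ∈ Ultrafilter.of Filter.atTop :=
      Ultrafilter.of_le Filter.atTop (Filter.mem_atTop {U})
    obtain ⟨s, hs1, hs2⟩ :=
      ((Ultrafilter.of Filter.atTop).toFilter.nonempty_of_mem
        (Filter.inter_mem h1 h2))
    obtain ⟨y, hyU, hyO⟩ := hs1
    have hUs : U ∈ s.filter (· ∈ 𝒰) := by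
      refine Finset.mem_filter.mpr ⟨?_, hU𝒰⟩
      exact hs2 (Finset.mem_singleton_self U)
    exact hyO (subset_closure ⟨U, hUs, hyU⟩)
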